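/- arXiv:1512.08874 — 3 statements merged into one kernel-verified Lean document; each statement's English description precedes it below -/
import Mathlib

section
/- Simple Moutard transform preserves the generalized analytic function equation: let u, f₁, f₁⁺, ψ be C¹ functions on D with ∂_z̄ f₁ = u·conj(f₁), ∂_z̄ f₁⁺ = -conj(u)·conj(f₁⁺), ∂_z̄ ψ = u·conj(ψ). Let ω_{f₁,f₁⁺} and ω_{ψ,f₁⁺} be purely imaginary potentials with ∂_z ω_{f,g} = fg, ∂_z̄ ω_{f,g} = -conj(fg), and assume ω_{f₁,f₁⁺} ≠ 0 on D. Define ũ = u + f₁·conj(f₁⁺)/ω_{f₁,f₁⁺} and ψ̃ = ψ - f₁·ω_{ψ,f₁⁺}/ω_{f₁,f₁⁺}. Then ∂_z̄ ψ̃ = ũ·conj(ψ̃) in D. -/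
open Complex ComplexConjugate

/-- Wirtinger derivative ∂_z = (∂_x - i ∂_y)/2. -/
noncomputable def dz (f : ℂ → ℂ) (z : ℂ) : ℂ :=
  (fderiv ℝ f z 1 - Complex.I * fderiv ℝ f z Complex.I) / 2

/-- Wirtinger derivative ∂_z̄ = (∂_x + i ∂_y)/2. -/
noncomputable def dzbar (f : ℂ → ℂ) (z : ℂ) : ℂ :=
  (fderiv ℝ f z 1 + Complex.I * fderiv ℝ f z Complex.I) / 2

lemma dzbar_sub' {f g : ℂ → ℂ} {z : ℂ} (hf : DifferentiableAt ℝ f z)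
    (hg : DifferentiableAt ℝ g z) :
    dzbar (fun w => f w - g w) z = dzbar f z - dzbar g z := by
  simp only [dzbar, fderiv_fun_sub hf hg, ContinuousLinearMap.sub_apply]; ring

lemma dzbar_mul' {f g : ℂ → ℂ} {z : ℂ} (hf : DifferentiableAt ℝ f z)
    (hg : DifferentiableAt ℝ g z) :
    dzbar (fun w => f w * g w) z = dzbar f z * g z + f z * dzbar g z := by
  simp only [dzbar, fderiv_fun_mul hf hg, ContinuousLinearMap.add_apply,
    ContinuousLinearMap.smul_apply, smul_eq_mul]; ring

lemma dzbar_inv' {g : ℂ → ℂ} {z : ℂ} (hg : DifferentiableAt ℝ g z) (h0 : g z ≠ 0) :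
    dzbar (fun w => (g w)⁻¹) z = -dzbar g z / (g z) ^ 2 := by
  have H : fderiv ℝ (fun w => (g w)⁻¹) z =
      (-(ContinuousLinearMap.mulLeftRight ℝ ℂ (g z)⁻¹) (g z)⁻¹).comp (fderiv ℝ g z) :=
    ((hasFDerivAt_inv' (𝕜 := ℝ) h0).comp z hg.hasFDerivAt).fderiv
  simp only [dzbar, H, ContinuousLinearMap.coe_comp', Function.comp_apply,
    ContinuousLinearMap.neg_apply, ContinuousLinearMap.mulLeftRight_apply]
  field_simp
  ring

lemma conj_eq_neg_of_re_zero {w : ℂ} (h : w.re = 0) : conj w = -w := by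
  apply Complex.ext <;> simp [h]

/-- the simple Moutard transform preserves the generalized analytic
function equation. -/
theorem simple_moutard_preserves_equation
    (D : Set ℂ) (hD : IsOpen D) (u f₁ f₁p ψ ωff ωψf : ℂ → ℂ)
    (hu : ContDiffOn ℝ 1 u D) (hf₁ : ContDiffOn ℝ 1 f₁ D)
    (hf₁p : ContDiffOn ℝ 1 f₁p D) (hψC : ContDiffOn ℝ 1 ψ D)
    (hωffC : ContDiffOn ℝ 1 ωff D) (hωψfC : ContDiffOn ℝ 1 ωψf D)
    (hf : ∀ z ∈ D, dzbar f₁ z = u z * conj (f₁ z))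
    (hfp : ∀ z ∈ D, dzbar f₁p z = -conj (u z) * conj (f₁p z))
    (hψ : ∀ z ∈ D, dzbar ψ z = u z * conj (ψ z))
    (hωff1 : ∀ z ∈ D, dz ωff z = f₁ z * f₁p z)
    (hωff2 : ∀ z ∈ D, dzbar ωff z = -conj (f₁ z * f₁p z))
    (hωffim : ∀ z ∈ D, (ωff z).re = 0)
    (hωψf1 : ∀ z ∈ D, dz ωψf z = ψ z * f₁p z)
    (hωψf2 : ∀ z ∈ D, dzbar ωψf z = -conj (ψ z * f₁p z))
    (hωψfim : ∀ z ∈ D, (ωψf z).re = 0)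
    (hne : ∀ z ∈ D, ωff z ≠ 0) :
    ∀ z ∈ D, dzbar (fun w => ψ w - f₁ w * ωψf w / ωff w) z =
      (u z + f₁ z * conj (f₁p z) / ωff z) *
        conj (ψ z - f₁ z * ωψf z / ωff z) := by
  intro z hz
  have hmem := hD.mem_nhds hz
  have dψ : DifferentiableAt ℝ ψ z := (hψC.contDiffAt hmem).differentiableAt one_ne_zero
  have df₁ : DifferentiableAt ℝ f₁ z := (hf₁.contDiffAt hmem).differentiableAt one_ne_zero
  have dωff : DifferentiableAt ℝ ωff z := (hωffC.contDiffAt hmem).differentiableAt one_ne_zero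
  have dωψf : DifferentiableAt ℝ ωψf z := (hωψfC.contDiffAt hmem).differentiableAt one_ne_zero
  have h0 : ωff z ≠ 0 := hne z hz
  have key : dzbar (fun w => ψ w - f₁ w * ωψf w / ωff w) z =
      dzbar ψ z - ((dzbar f₁ z * ωψf z + f₁ z * dzbar ωψf z) * (ωff z)⁻¹ +
        (f₁ z * ωψf z) * (-dzbar ωff z / (ωff z) ^ 2)) := by
    simp only [div_eq_mul_inv]
    rw [dzbar_sub' dψ ((df₁.fun_mul dωψf).fun_mul (dωff.fun_inv h0)),
      dzbar_mul' (df₁.fun_mul dωψf) (dωff.fun_inv h0), dzbar_mul' df₁ dωψf,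
      dzbar_inv' dωff h0]
    ring
  rw [key, hψ z hz, hf z hz, hωψf2 z hz, hωff2 z hz]
  have hcff : conj (ωff z) = -ωff z := conj_eq_neg_of_re_zero (hωffim z hz)
  have hcψf : conj (ωψf z) = -ωψf z := conj_eq_neg_of_re_zero (hωψfim z hz)
  simp only [map_sub, map_mul, map_div₀, hcff, hcψf]
  field_simp
  ring
end

section
/- Composition identity for the transformed coefficient (Theorem 1, coefficient part): with ω_{f₁,f₁⁺} ≠ 0 and Δ := ω_{f₁,f₁⁺}ω_{f₂,f₂⁺} - ω_{f₂,f₁⁺}ω_{f₁,f₂⁺} ≠ 0, and with ω's purely imaginary (so that conj(ω) = -ω), the iterated coefficient u + f₁·conj(f₁⁺)/ω_{f₁,f₁⁺} + f̃₂·conj(f̃₂⁺)/ω_{f̃₂,f̃₂⁺}, where f̃₂ = f₂ - f₁·ω_{f₂,f₁⁺}/ω_{f₁,f₁⁺}, f̃₂⁺ = f₂⁺ - f₁⁺·ω_{f₁,f₂⁺}/ω_{f₁,f₁⁺}, ω_{f̃₂,f̃₂⁺} = Δ/ω_{f₁,f₁⁺}, equals u + (f₁·conj(f₁⁺)·ω_{f₂,f₂⁺}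 - f₂·conj(f₁⁺)·ω_{f₁,f₂⁺} - f₁·conj(f₂⁺)·ω_{f₂,f₁⁺} + f₂·conj(f₂⁺)·ω_{f₁,f₁⁺})/Δ. -/
open ComplexConjugate

/-- Theorem 1, coefficient part: the iterated Moutard coefficient
equals the N = 2 Moutard coefficient, as an algebraic identity over ℂ with the
ω's purely imaginary. -/
theorem composition_of_simple_moutard_coefficient
    (u f₁ f₂ f₁p f₂p ω11 ω21 ω12 ω22 : ℂ)
    (h11 : conj ω11 = -ω11) (h21 : conj ω21 = -ω21)
    (h12 : conj ω12 = -ω12) (h22 : conj ω22 = -ω22)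
    (h1 : ω11 ≠ 0)
    (hΔ : ω11 * ω22 - ω21 * ω12 ≠ 0) :
    u + f₁ * conj f₁p / ω11 +
      (f₂ - f₁ * ω21 / ω11) * conj (f₂p - f₁p * ω12 / ω11) /
        ((ω11 * ω22 - ω21 * ω12) / ω11) =
    u + (f₁ * conj f₁p * ω22 - f₂ * conj f₁p * ω12 -
         f₁ * conj f₂p * ω21 + f₂ * conj f₂p * ω11) /
        (ω11 * ω22 - ω21 * ω12) := by
  simp only [map_sub, map_mul, map_div₀, h11, h12]
  field_simp
  ring
end

section
/- Cancellation of the leading singularity in the Moutard-transformed coefficient (key step of Theorem 3): let φ be real-valued, b(y) = β_{-1}(y)β⁺_{-1}(y) > 0 real-valued continuous. Suppose near x = 0: u_*(x,y) = e^{2iφ(y)}(-1/(2x) + O(1)), f_*·conj(f⁺_*)(x,y) = i·e^{2iφ(y)}·b(y)/x² + O(1/x), and ω(x,y) = 2i·b(y)/x + O(1) with ω nonvanishing for 0 < |x| < δ. Then 1/ω = -i·x/(2b(y)) + O(x²) and ũ := u_* + f_*·conj(f⁺_*)/ω = O(1) as x → 0, uniformly for y in a compact subinterval, i.e. the transformed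 coefficient ũ is bounded near the contour {x = 0}. -/
open Complex

set_option maxHeartbeats 1000000 in

/-- key step of Theorem 3: the singular parts cancel and the
Moutard-transformed coefficient ũ = u_* + f_*·conj(f⁺_*)/ω is bounded near the
contour {x = 0}, together with the asymptotics 1/ω = -i·x/(2b(y)) + O(x²). -/
theorem transformed_coefficient_bounded
    (a b ε : ℝ) (hε : 0 < ε)
    (φ : ℝ → ℝ) (bb : ℝ → ℝ)
    (hbbcont : ContinuousOn bb (Set.Icc a b))
    (hbbpos : ∀ y ∈ Set.Icc a b, 0 < bb y)
    (u p ω : ℝ → ℝ → ℂ)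
    (C : ℝ)
    -- u_*(x,y) = e^{2iφ(y)}·(-1/(2x)) + O(1)
    (hu : ∀ x y, 0 < |x| → |x| < ε → y ∈ Set.Icc a b →
      ‖(u x y -
        Complex.exp (2 * Complex.I * (φ y : ℂ)) * (-(1 / (2 * (x : ℂ)))))‖ ≤ C)
    -- f_*·conj(f⁺_*)(x,y) = i·e^{2iφ(y)}·b(y)/x² + O(1/x)
    (hp : ∀ x y, 0 < |x| → |x| < ε → y ∈ Set.Icc a b →
      ‖(p x y -
        Complex.I * Complex.exp (2 * Complex.I * (φ y : ℂ)) * (bb y : ℂ) /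
          (x : ℂ) ^ 2)‖ ≤ C / |x|)
    -- ω(x,y) = 2i·b(y)/x + O(1)
    (hω : ∀ x y, 0 < |x| → |x| < ε → y ∈ Set.Icc a b →
      ‖(ω x y - 2 * Complex.I * (bb y : ℂ) / (x : ℂ))‖ ≤ C)
    -- ω nonvanishing near the contour
    (hωne : ∃ δ₀ > 0, ∀ x y, 0 < |x| → |x| < δ₀ → y ∈ Set.Icc a b →
      ω x y ≠ 0) :
    ∃ δ ∈ Set.Ioo 0 ε, ∃ C' > 0, ∀ x y, 0 < |x| → |x| < δ → y ∈ Set.Icc a b →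
      ω x y ≠ 0 ∧
      ‖(1 / ω x y + Complex.I * (x : ℂ) / (2 * (bb y : ℂ)))‖ ≤
        C' * x ^ 2 ∧
      ‖(u x y + p x y / ω x y)‖ ≤ C' := by
  by_cases hab : a ≤ b
  · obtain ⟨y₀, hy₀, hmin⟩ := isCompact_Icc.exists_isMinOn (Set.nonempty_Icc.mpr hab) hbbcont
    obtain ⟨y₁, hy₁, hmax⟩ := isCompact_Icc.exists_isMaxOn (Set.nonempty_Icc.mpr hab) hbbcont
    set b₀ := bb y₀ with hb₀def
    set B := bb y₁ with hBdef
    have hb₀ : 0 < b₀ := hbbpos y₀ hy₀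
    have hB : 0 < B := hbbpos y₁ hy₁
    set D := |C| + 1 with hDdef
    have hD0 : 0 < D := by positivity
    have hCD : C ≤ D := le_trans (le_abs_self C) (by linarith)
    set δ := min (ε/2) (b₀/(2*D)) with hδdef
    have hδ0 : 0 < δ := lt_min (by positivity) (by positivity)
    refine ⟨δ, ⟨hδ0, lt_of_le_of_lt (min_le_left _ _) (by linarith)⟩,
      D + D*B/(2*b₀^2) + D/b₀ + D/(2*b₀^2), by positivity, ?_⟩
    intro x y hx hxδ hy
    have hxε : |x| < ε := by
      have := lt_of_lt_of_le hxδ (min_le_left (ε/2) (b₀/(2*D)))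
      linarith
    have hxb : |x| < b₀/(2*D) := lt_of_lt_of_le hxδ (min_le_right _ _)
    have hxb' : |x| * (2*D) < b₀ := (lt_div_iff₀ (by positivity)).mp hxb
    have hby : b₀ ≤ bb y := hmin hy
    have hbyB : bb y ≤ B := hmax hy
    have hbypos : 0 < bb y := hbbpos y hy
    have hxne : x ≠ 0 := abs_pos.mp hx
    have hX : (x:ℂ) ≠ 0 := Complex.ofReal_ne_zero.mpr hxne
    have hbc : (bb y : ℂ) ≠ 0 := Complex.ofReal_ne_zero.mpr hbypos.ne'
    have habsX : ‖(x:ℂ)‖ = |x| := by rw [Complex.norm_real, Real.norm_eq_abs]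
    have habsb : ‖(bb y : ℂ)‖ = bb y := by
      rw [Complex.norm_real, Real.norm_eq_abs, abs_of_pos hbypos]
    have he1 : ‖(Complex.exp (2 * Complex.I * (φ y : ℂ)))‖ = 1 := by
      rw [Complex.norm_exp]; simp [Complex.mul_re]
    have hA := hω x y hx hxε hy
    set A := ‖(ω x y - 2 * Complex.I * (bb y : ℂ) / (x:ℂ))‖ with hAdef
    have hAD : A ≤ D := le_trans hA hCD
    have hA0 : 0 ≤ A := norm_nonneg _
    have h2ib : ‖(2 * Complex.I * (bb y : ℂ) / (x:ℂ))‖ = 2 * bb y / |x| := by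
      rw [norm_div, norm_mul, norm_mul, Complex.norm_two, Complex.norm_I, habsb, habsX]
      ring
    set W := ‖(ω x y)‖ with hWdef
    have hW0 : 0 ≤ W := norm_nonneg _
    have hWx : b₀ ≤ W * |x| := by
      have key : 2 * bb y / |x| ≤ W + A := by
        calc 2 * bb y / |x|
            = ‖(ω x y - (ω x y - 2 * Complex.I * (bb y : ℂ) / (x:ℂ)))‖ := by
              rw [sub_sub_cancel, h2ib]
          _ ≤ W + A := norm_sub_le _ _
      have key' : 2 * bb y ≤ (W + A) * |x| := by
        rw [div_le_iff₀ hx] at key; exact key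
      nlinarith [mul_le_mul_of_nonneg_right hAD (abs_nonneg x)]
    have hWpos : 0 < W := by nlinarith [hWx, hx, hb₀]
    have hωne' : ω x y ≠ 0 := by
      intro h
      rw [hWdef, h] at hWpos
      simp at hWpos
    have id1 : 1 / ω x y + Complex.I * (x:ℂ) / (2 * (bb y : ℂ))
        = (Complex.I * (x:ℂ) * (ω x y - 2 * Complex.I * (bb y : ℂ) / (x:ℂ)))
            / (2 * (bb y : ℂ) * ω x y) := by
      field_simp
      ring_nf
      simp only [Complex.I_sq]
      try ring_nf
    have habs : ‖((Complex.I * (x:ℂ) * (ω x y - 2 * Complex.I * (bb y : ℂ) / (x:ℂ)))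
            / (2 * (bb y : ℂ) * ω x y))‖
        = (|x| * A) / (2 * bb y * W) := by
      simp only [norm_div, norm_mul, Complex.norm_I, Complex.norm_two, habsb, habsX,
        ← hAdef, ← hWdef]
      ring
    have hden : 0 < 2 * bb y * W := by positivity
    have hmain : ‖(1 / ω x y + Complex.I * (x:ℂ) / (2 * (bb y : ℂ)))‖
        ≤ D/(2*b₀^2) * x^2 := by
      rw [id1, habs, div_le_iff₀ hden]
      have hxx : x^2 = |x| * |x| := by rw [← _root_.sq_abs x]; ring
      rw [hxx]
      calc |x| * A ≤ |x| * D := mul_le_mul_of_nonneg_left hAD (abs_nonneg x)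
        _ = D * b₀ * b₀ * |x| / b₀^2 := by field_simp [hb₀.ne']
        _ ≤ D * bb y * (W * |x|) * |x| / b₀^2 := by gcongr
        _ = D / (2*b₀^2) * (|x| * |x|) * (2 * bb y * W) := by
            field_simp [hb₀.ne']
    have hC'pos : (0:ℝ) < D + D*B/(2*b₀^2) + D/b₀ + D/(2*b₀^2) := by positivity
    refine ⟨hωne', ?_, ?_⟩
    · refine le_trans hmain ?_
      apply mul_le_mul_of_nonneg_right _ (sq_nonneg x)
      have : 0 ≤ D + D*B/(2*b₀^2) + D/b₀ := by positivity
      linarith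
    · set e := Complex.exp (2 * Complex.I * (φ y : ℂ)) with hedef
      have id2 : u x y + p x y / ω x y
          = (u x y - e * (-(1 / (2 * (x:ℂ)))))
            + (Complex.I * e * (bb y : ℂ) / (x:ℂ)^2)
                * (1 / ω x y + Complex.I * (x:ℂ) / (2 * (bb y:ℂ)))
            + (p x y - Complex.I * e * (bb y : ℂ) / (x:ℂ)^2) * (1 / ω x y) := by
        have hmulI : (Complex.I * e * (bb y:ℂ)/(x:ℂ)^2) * (Complex.I*(x:ℂ)/(2*(bb y:ℂ)))
            = e * (-(1/(2*(x:ℂ)))) := by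
          field_simp [hX, hbc]
          ring_nf
          simp only [Complex.I_sq]
          try ring_nf
        rw [mul_add, hmulI]
        ring
      rw [id2]
      have t1 : ‖(u x y - e * (-(1 / (2 * (x:ℂ)))))‖ ≤ D :=
        le_trans (hu x y hx hxε hy) hCD
      have hcoef : ‖(Complex.I * e * (bb y : ℂ) / (x:ℂ)^2)‖ = bb y / x^2 := by
        rw [norm_div, norm_mul, norm_mul, Complex.norm_I, he1, habsb, norm_pow, habsX, _root_.sq_abs]
        ring
      have hx2 : (0:ℝ) < x^2 := by positivity
      have t2 : ‖((Complex.I * e * (bb y : ℂ) / (x:ℂ)^2)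
              * (1 / ω x y + Complex.I * (x:ℂ) / (2 * (bb y:ℂ))))‖
          ≤ D*B/(2*b₀^2) := by
        rw [norm_mul, hcoef]
        calc bb y / x^2 * ‖(1 / ω x y + Complex.I * (x:ℂ) / (2 * (bb y:ℂ)))‖
            ≤ bb y / x^2 * (D/(2*b₀^2) * x^2) :=
              mul_le_mul_of_nonneg_left hmain (by positivity)
          _ = bb y * (D/(2*b₀^2)) := by
              field_simp
          _ ≤ B * (D/(2*b₀^2)) := mul_le_mul_of_nonneg_right hbyB (by positivity)
          _ = D*B/(2*b₀^2) := by ring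
      have hinvW : ‖(1 / ω x y)‖ ≤ |x| / b₀ := by
        rw [norm_div, norm_one, ← hWdef, div_le_div_iff₀ hWpos hb₀]
        nlinarith [hWx]
      have t3 : ‖((p x y - Complex.I * e * (bb y : ℂ) / (x:ℂ)^2) * (1 / ω x y))‖
          ≤ D / b₀ := by
        rw [norm_mul]
        have hpb : ‖(p x y - Complex.I * e * (bb y : ℂ) / (x:ℂ)^2)‖ ≤ D / |x| := by
          refine le_trans (hp x y hx hxε hy) ?_
          gcongr
        calc ‖(p x y - Complex.I * e * (bb y : ℂ) / (x:ℂ)^2)‖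
                * ‖(1 / ω x y)‖
            ≤ (D / |x|) * (|x| / b₀) :=
              mul_le_mul hpb hinvW (norm_nonneg _) (by positivity)
          _ = D / b₀ := by
              field_simp
      calc ‖((u x y - e * (-(1 / (2 * (x:ℂ)))))
              + (Complex.I * e * (bb y : ℂ) / (x:ℂ)^2)
                  * (1 / ω x y + Complex.I * (x:ℂ) / (2 * (bb y:ℂ)))
              + (p x y - Complex.I * e * (bb y : ℂ) / (x:ℂ)^2) * (1 / ω x y))‖
          ≤ ‖((u x y - e * (-(1 / (2 * (x:ℂ)))))
              + (Complex.I * e * (bb y : ℂ) / (x:ℂ)^2)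
                  * (1 / ω x y + Complex.I * (x:ℂ) / (2 * (bb y:ℂ))))‖
            + ‖((p x y - Complex.I * e * (bb y : ℂ) / (x:ℂ)^2) * (1 / ω x y))‖ :=
            norm_add_le _ _
        _ ≤ (‖(u x y - e * (-(1 / (2 * (x:ℂ)))))‖
              + ‖((Complex.I * e * (bb y : ℂ) / (x:ℂ)^2)
                  * (1 / ω x y + Complex.I * (x:ℂ) / (2 * (bb y:ℂ))))‖)
            + ‖((p x y - Complex.I * e * (bb y : ℂ) / (x:ℂ)^2) * (1 / ω x y))‖ := by
            have := norm_add_le (u x y - e * (-(1 / (2 * (x:ℂ)))))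
              ((Complex.I * e * (bb y : ℂ) / (x:ℂ)^2)
                  * (1 / ω x y + Complex.I * (x:ℂ) / (2 * (bb y:ℂ))))
            linarith
        _ ≤ D + D*B/(2*b₀^2) + D/b₀ + D/(2*b₀^2) := by
            have hnn : (0:ℝ) ≤ D/(2*b₀^2) := by positivity
            linarith
  · refine ⟨ε/2, ⟨by positivity, by linarith⟩, 1, one_pos, ?_⟩
    intro x y _ _ hy
    exact absurd hy (by simp [Set.Icc_eq_empty_iff.mpr hab])
end
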